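/- For the Lie algebra L(3,5) = sl(2,ℝ) with brackets [f_1, f_2] = f_1, [f_1, f_3] = -2f_2, [f_2, f_3] = f_3, and orthonormal basis e_1 = αf_1, e_2 = βf_1 + εf_2, e_3 = γf_1 + ζf_2 + ιf_3 (α, ε, ι ≠ 0), the generalised Killing endomorphism matrix A computed via the structure-constant formula (A_{11} = (1/4)(c_{12}^3 - c_{13}^2 - c_{23}^1), A_{12} = -(1/2)c_{23}^2, A_{13} = -(1/2)c_{23}^3, A_{21} = (1/2)c_{13}^1, A_{22} = (1/4)(c_{12}^3 + c_{13}^2 + c_{23}^1), A_{23} = (1/2)c_{13}^3, A_{31} = -(1/2)c_{12}^1, A_{32} = -(1/2)c_{12}^2, A_{33} = (1/4)(-c_{12}^3 - c_{13}^2 + c_{23}^1)) is symmetric for every choice of α, β, γ, ε, ζ, ι with αει ≠ 0. -/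
import Mathlib


/-- The bracket of `sl(2,ℝ)` in the basis `(f_1,f_2,f_3)`: `[f_1,f_2] = f_1`, `[f_1,f_3] = -2f_2`, `[f_2,f_3] = f_3`. -/
def sl2bracket (u v : Fin 3 → ℝ) : Fin 3 → ℝ :=
  ![u 0 * v 1 - u 1 * v 0, -2 * (u 0 * v 2 - u 2 * v 0), u 1 * v 2 - u 2 * v 1]

/-- The generalised Killing endomorphism matrix built from structure constants. -/
noncomputable def gkMatrix (c12_1 c12_2 c12_3 c13_1 c13_2 c13_3 c23_1 c23_2 c23_3 : ℝ) :
    Matrix (Fin 3) (Fin 3) ℝ :=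
  !![(1/4) * (c12_3 - c13_2 - c23_1), -(1/2) * c23_2, -(1/2) * c23_3;
     (1/2) * c13_1, (1/4) * (c12_3 + c13_2 + c23_1), (1/2) * c13_3;
     -(1/2) * c12_1, -(1/2) * c12_2, (1/4) * (-c12_3 - c13_2 + c23_1)]

theorem sl2_gk_symm (α β γ ε ζ ι : ℝ)
    (hα : α ≠ 0) (hε : ε ≠ 0) (hι : ι ≠ 0)
    (e : Fin 3 → Fin 3 → ℝ)
    (he : e = ![![α, 0, 0], ![β, ε, 0], ![γ, ζ, ι]])
    (c : Fin 3 → Fin 3 → Fin 3 → ℝ)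
    (hc : ∀ i j, sl2bracket (e i) (e j) = ∑ k, c i j k • e k) :
    (gkMatrix (c 0 1 0) (c 0 1 1) (c 0 1 2) (c 0 2 0) (c 0 2 1) (c 0 2 2)
        (c 1 2 0) (c 1 2 1) (c 1 2 2)).IsSymm := by
  subst he
  have a0 := congrFun (hc 0 1) 0
  have a1 := congrFun (hc 0 1) 1
  have a2 := congrFun (hc 0 1) 2
  have b0 := congrFun (hc 0 2) 0
  have b1 := congrFun (hc 0 2) 1
  have b2 := congrFun (hc 0 2) 2
  have d1 := congrFun (hc 1 2) 1
  have d2 := congrFun (hc 1 2) 2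
  simp [sl2bracket, Fin.sum_univ_three] at a0 a1 a2 b0 b1 b2 d1 d2
  have hc012 : c 0 1 2 = 0 := a2.resolve_right hι
  have hc022 : c 0 2 2 = 0 := b2.resolve_right hι
  have hd2 : ε = c 1 2 2 := d2.resolve_right hι
  have hc011 : c 0 1 1 = 0 := by
    have h : c 0 1 1 * ε = 0 * ε := by linear_combination -a1 - ζ * hc012
    exact mul_right_cancel₀ hε h
  have hc010 : c 0 1 0 = ε := by
    have h : c 0 1 0 * α = ε * α := by
      linear_combination -a0 - β * hc011 - γ * hc012
    exact mul_right_cancel₀ hα h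
  have hkey : c 0 2 0 = -(c 1 2 1) := by
    have h : c 0 2 0 * (α * ε) = -(c 1 2 1) * (α * ε) := by
      linear_combination (-ε) * b0 + (-α) * d1 + β * b1 + (β * ζ - γ * ε) * hc022
        + (α * ζ) * hd2
    exact mul_right_cancel₀ (mul_ne_zero hα hε) h
  rw [Matrix.IsSymm]
  ext i j
  fin_cases i <;> fin_cases j <;>
    simp [gkMatrix, Matrix.transpose_apply, hc010, hc011, hc012, hc022, ← hd2, hkey]
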